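/- Let Ω be a nonempty closed convex subset of a normed space X and x̄ ∈ Ω. Then the subdifferential of the distance function satisfies ∂ dist(·,Ω)(x̄) = N(x̄; Ω) ∩ B*, where N(x̄;Ω) = {x* : ⟨x*, x − x̄⟩ ≤ 0 for all x ∈ Ω} is the normal cone and B* is the closed unit ball of the dual space. -/

import Mathlib

open Metric Set

theorem subdifferential_of_distance_at_point_of_set
    {X : Type*} [NormedAddCommGroup X] [NormedSpace ℝ X]
    (Ω : Set X) (hne : Ω.Nonempty) (hcl : IsClosed Ω) (hconv : Convex ℝ Ω)
    (xb : X) (hxb : xb ∈ Ω) :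
    {f : StrongDual ℝ X | ∀ x, f (x - xb) ≤ infDist x Ω - infDist xb Ω}
      = {f : StrongDual ℝ X | ∀ x ∈ Ω, f (x - xb) ≤ 0} ∩ closedBall 0 1 := by
  have h0 : infDist xb Ω = 0 := infDist_zero_of_mem hxb
  ext f
  simp only [mem_setOf_eq, mem_inter_iff, mem_closedBall, dist_zero_right, h0, sub_zero]
  constructor
  · intro hf
    refine ⟨fun x hx => (hf x).trans (le_of_eq (infDist_zero_of_mem hx)), ?_⟩
    refine ContinuousLinearMap.opNorm_le_bound f zero_le_one (fun v => ?_)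
    have h1 := hf (xb + v)
    have h2 := hf (xb - v)
    simp only [add_sub_cancel_left] at h1
    have h2' : f (-v) ≤ infDist (xb - v) Ω := by
      simpa [sub_sub_cancel_left] using h2
    have hb1 : infDist (xb + v) Ω ≤ ‖v‖ := by
      have := infDist_le_dist_of_mem (x := xb + v) hxb
      simpa [dist_eq_norm] using this
    have hb2 : infDist (xb - v) Ω ≤ ‖v‖ := by
      have := infDist_le_dist_of_mem (x := xb - v) hxb
      simpa [dist_eq_norm] using this
    have : |f v| ≤ ‖v‖ := by
      rw [abs_le]
      constructor
      · have := h2'.trans hb2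
        simp only [map_neg] at this
        linarith
      · exact h1.trans hb1
    calc ‖f v‖ = |f v| := rfl
      _ ≤ ‖v‖ := this
      _ = 1 * ‖v‖ := (one_mul _).symm
  · rintro ⟨hN, hnorm⟩ x
    rw [infDist_eq_iInf]
    have : Nonempty Ω := hne.to_subtype
    refine le_ciInf fun w => ?_
    obtain ⟨w, hw⟩ := w
    have h1 : f (x - w) ≤ ‖x - w‖ := by
      calc f (x - w) ≤ |f (x - w)| := le_abs_self _
        _ = ‖f (x - w)‖ := rfl
        _ ≤ ‖f‖ * ‖x - w‖ := f.le_opNorm _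
        _ ≤ 1 * ‖x - w‖ := by
            exact mul_le_mul_of_nonneg_right hnorm (norm_nonneg _)
        _ = ‖x - w‖ := one_mul _
    have h2 : f (w - xb) ≤ 0 := hN w hw
    have : f (x - xb) = f (x - w) + f (w - xb) := by
      rw [← map_add]; congr 1; abel
    rw [this, dist_eq_norm]
    linarith
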